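/- arXiv:0907.0014 — 6 statements merged into one kernel-verified Lean document; each statement's English description precedes it below -/
import Mathlib

section
/- For all integers M ≥ 2 and all n ∈ ℤ, the successive increments of f_M are bounded: |f_M(n+1) − f_M(n)| ≤ (N_K + 1)^{M−2}. -/
/-- The number of `M`-tuples `(n_1, …, n_M)` with each `n_i ∈ {0, …, NK}`
and `n_1 + ⋯ + n_M = n`. -/
def f (NK M : ℕ) (n : ℤ) : ℕ :=
  (Finset.univ.filter
    (fun t : Fin M → Fin (NK + 1) => (∑ i, ((t i : ℕ) : ℤ)) = n)).card

lemma f_succ (NK M : ℕ) (n : ℤ) :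
    f NK (M + 1) n = ∑ k ∈ Finset.range (NK + 1), f NK M (n - k) := by
  rw [← Fin.sum_univ_eq_sum_range (fun k => f NK M (n - k)) (NK + 1)]
  unfold f
  rw [Finset.card_eq_sum_card_fiberwise
    (f := fun t : Fin (M+1) → Fin (NK+1) => t 0) (t := Finset.univ)
    (fun x _ => Finset.mem_univ _)]
  refine Finset.sum_congr rfl fun k _ => ?_
  rw [Finset.filter_filter]
  refine Finset.card_bij' (fun t _ => Fin.tail t) (fun s _ => Fin.cons k s) ?_ ?_ ?_ ?_
  · intro t ht
    simp only [Finset.mem_filter, Finset.mem_univ, true_and] at ht ⊢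
    obtain ⟨hsum, h0⟩ := ht
    rw [Fin.sum_univ_succ, h0] at hsum
    show ∑ i : Fin M, ((t i.succ : ℕ) : ℤ) = n - k
    linarith
  · intro s hs
    simp only [Finset.mem_filter, Finset.mem_univ, true_and] at hs ⊢
    refine ⟨?_, by simp⟩
    rw [Fin.sum_univ_succ]
    simp only [Fin.cons_zero, Fin.cons_succ]
    linarith
  · intro t ht
    simp only [Finset.mem_filter, Finset.mem_univ, true_and] at ht
    show Fin.cons k (Fin.tail t) = t
    rw [← ht.2]
    exact Fin.cons_self_tail t
  · intro s _
    funext i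
    simp [Fin.tail]

lemma f_le (NK M : ℕ) (n : ℤ) : f NK (M + 1) n ≤ (NK + 1) ^ M := by
  have h : f NK (M+1) n ≤ (Finset.univ : Finset (Fin M → Fin (NK+1))).card := by
    apply Finset.card_le_card_of_injOn (fun t => Fin.tail t) (fun _ _ => Finset.mem_univ _)
    intro a ha b hb hab
    have hab' : Fin.tail a = Fin.tail b := hab
    simp only [Finset.coe_filter, Set.mem_setOf_eq, Finset.mem_univ, true_and] at ha hb
    have hta : ∑ i : Fin M, ((Fin.tail a i : ℕ) : ℤ) = ∑ i : Fin M, ((Fin.tail b i : ℕ) : ℤ) := by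
      rw [hab']
    rw [Fin.sum_univ_succ] at ha hb
    have h0 : ((a 0 : ℕ) : ℤ) = ((b 0 : ℕ) : ℤ) := by
      have ea : ∑ i : Fin M, ((Fin.tail a i : ℕ) : ℤ) = ∑ i : Fin M, ((a i.succ : ℕ) : ℤ) := rfl
      have eb : ∑ i : Fin M, ((Fin.tail b i : ℕ) : ℤ) = ∑ i : Fin M, ((b i.succ : ℕ) : ℤ) := rfl
      rw [ea, eb] at hta
      linarith
    have h0' : a 0 = b 0 := by
      apply Fin.ext
      exact_mod_cast h0
    rw [← Fin.cons_self_tail a, ← Fin.cons_self_tail b, h0', hab']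
  simpa using h

/-- The successive increments of `f_M` are bounded by `(N_K + 1)^(M-2)` for `M ≥ 2`. -/
theorem stmt2 (NK : ℕ) (hNK : 0 < NK) (M : ℕ) (hM : 2 ≤ M) (n : ℤ) :
    |(f NK M (n + 1) : ℤ) - (f NK M n : ℤ)| ≤ ((NK : ℤ) + 1) ^ (M - 2) := by
  obtain ⟨m, rfl⟩ : ∃ m, M = m + 2 := ⟨M - 2, by omega⟩
  have key : (f NK (m + 2) (n + 1) : ℤ) - f NK (m + 2) n
      = (f NK (m + 1) (n + 1) : ℤ) - f NK (m + 1) (n - NK) := by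
    have e1 : f NK (m + 2) (n + 1) = ∑ k ∈ Finset.range (NK + 1), f NK (m+1) (n + 1 - k) :=
      f_succ NK (m+1) (n+1)
    have e2 : f NK (m + 2) n = ∑ k ∈ Finset.range (NK + 1), f NK (m+1) (n - k) :=
      f_succ NK (m+1) n
    rw [e1, e2]
    push_cast
    rw [Finset.sum_range_succ' (fun k => (f NK (m+1) (n + 1 - (k:ℤ)) : ℤ)) NK,
      Finset.sum_range_succ (fun k => (f NK (m+1) (n - (k:ℤ)) : ℤ)) NK]
    push_cast
    have h3 : ∀ k ∈ Finset.range NK,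
        (f NK (m+1) (n + 1 - ((k:ℤ) + 1)) : ℤ) = (f NK (m+1) (n - (k:ℤ)) : ℤ) := by
      intro k _
      have e : n + 1 - ((k:ℤ) + 1) = n - k := by ring
      rw [e]
    rw [Finset.sum_congr rfl h3]
    simp only [sub_zero]
    ring
  rw [key]
  have hb1 : (f NK (m+1) (n+1) : ℤ) ≤ ((NK : ℤ) + 1) ^ m := by
    have := f_le NK m (n+1)
    exact_mod_cast this
  have hb2 : (f NK (m+1) (n - NK) : ℤ) ≤ ((NK : ℤ) + 1) ^ m := by
    have := f_le NK m (n - NK)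
    exact_mod_cast this
  have hp1 : (0:ℤ) ≤ (f NK (m+1) (n+1) : ℤ) := Int.natCast_nonneg _
  have hp2 : (0:ℤ) ≤ (f NK (m+1) (n - NK) : ℤ) := Int.natCast_nonneg _
  have hred : m + 2 - 2 = m := by omega
  rw [hred, abs_sub_le_iff]
  constructor <;> linarith
end

section
/- For every integer M ≥ 3, the sum Σ_{n=−1}^{M·N_K} (f_M(n+1) − f_M(n))² / (f_M(n+1) + f_M(n)) (each term interpreted as 0 when the denominator is 0, with differences and ratios taken in ℝ) is at most M! · (N_K + 1)^{M−2}. -/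
namespace Stmt8

noncomputable def t (a b : ℕ) : ℝ :=
  if a + b = 0 then 0 else ((a : ℝ) - b) ^ 2 / ((a : ℝ) + b)

lemma t_nonneg (a b : ℕ) : 0 ≤ t a b := by
  unfold t; split
  · exact le_refl 0
  · positivity

lemma t_subadd (a₁ b₁ a₂ b₂ : ℕ) :
    t (a₁ + a₂) (b₁ + b₂) ≤ t a₁ b₁ + t a₂ b₂ := by
  unfold t
  rcases Nat.eq_zero_or_pos (a₁ + b₁) with h1 | h1
  · obtain ⟨ha, hb⟩ : a₁ = 0 ∧ b₁ = 0 := by omega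
    subst ha; subst hb; simp
  rcases Nat.eq_zero_or_pos (a₂ + b₂) with h2 | h2
  · obtain ⟨ha, hb⟩ : a₂ = 0 ∧ b₂ = 0 := by omega
    subst ha; subst hb; simp
  have hs : ¬ (a₁ + a₂ + (b₁ + b₂) = 0) := by omega
  rw [if_neg hs, if_neg (by omega), if_neg (by omega)]
  have hs1 : (0:ℝ) < (a₁ : ℝ) + b₁ := by
    have : (0:ℝ) < ((a₁ + b₁ : ℕ) : ℝ) := by exact_mod_cast h1
    push_cast at this; linarith
  have hs2 : (0:ℝ) < (a₂ : ℝ) + b₂ := by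
    have : (0:ℝ) < ((a₂ + b₂ : ℕ) : ℝ) := by exact_mod_cast h2
    push_cast at this; linarith
  push_cast
  rw [div_add_div _ _ (ne_of_gt hs1) (ne_of_gt hs2), div_le_div_iff₀ (by linarith) (by positivity)]
  nlinarith [sq_nonneg (((a₁:ℝ) - b₁) * ((a₂:ℝ) + b₂) - ((a₂:ℝ) - b₂) * ((a₁:ℝ) + b₁))]

lemma t_sum_le {ι : Type*} (s : Finset ι) (a b : ι → ℕ) :
    t (∑ k ∈ s, a k) (∑ k ∈ s, b k) ≤ ∑ k ∈ s, t (a k) (b k) := by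
  classical
  induction s using Finset.cons_induction with
  | empty => simp [t]
  | cons k s hk ih =>
    rw [Finset.sum_cons, Finset.sum_cons, Finset.sum_cons]
    exact le_trans (t_subadd _ _ _ _) (by linarith)

lemma f_recur (NK M : ℕ) (n : ℤ) :
    f NK (M + 1) n = ∑ k ∈ Finset.range (NK + 1), f NK M (n - k) := by
  classical
  rw [f]
  rw [Finset.card_eq_sum_card_fiberwise (f := fun x : Fin (M+1) → Fin (NK+1) => x 0)
    (t := Finset.univ) (fun x _ => Finset.mem_univ _)]
  rw [← Fin.sum_univ_eq_sum_range (fun k => f NK M (n - k)) (NK+1)]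
  apply Finset.sum_congr rfl
  intro k _
  rw [f, Finset.filter_filter]
  refine Finset.card_bij' (fun x _ => Fin.tail x) (fun y _ => Fin.cons k y) ?_ ?_ ?_ ?_
  · intro x hx
    simp only [Finset.mem_filter, Finset.mem_univ, true_and] at hx ⊢
    obtain ⟨hsum, h0⟩ := hx
    rw [Fin.sum_univ_succ] at hsum
    have h0' : ((x 0 : ℕ) : ℤ) = (k : ℕ) := by rw [h0]
    rw [h0'] at hsum
    simp only [Fin.tail]
    linarith
  · intro y hy
    simp only [Finset.mem_filter, Finset.mem_univ, true_and] at hy ⊢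
    refine ⟨?_, ?_⟩
    · rw [Fin.sum_univ_succ]
      simp only [Fin.cons_zero, Fin.cons_succ]
      rw [hy]; ring
    · simp
  · intro x hx
    simp only [Finset.mem_filter, Finset.mem_univ, true_and] at hx
    obtain ⟨-, h0⟩ := hx
    subst h0
    exact Fin.cons_self_tail x
  · intro y _
    exact Fin.tail_cons (α := fun _ : Fin (M+1) => Fin (NK+1)) k y

lemma f_zero_of_neg (NK M : ℕ) {n : ℤ} (h : n < 0) : f NK M n = 0 := by
  rw [f, Finset.card_eq_zero, Finset.filter_eq_empty_iff]
  intro x _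
  have : (0:ℤ) ≤ ∑ i, ((x i : ℕ) : ℤ) :=
    Finset.sum_nonneg fun i _ => by positivity
  intro hgeq
  rw [hgeq] at this
  omega

lemma f_zero_of_gt (NK M : ℕ) {n : ℤ} (h : (M * NK : ℤ) < n) : f NK M n = 0 := by
  rw [f, Finset.card_eq_zero, Finset.filter_eq_empty_iff]
  intro x _
  have hle : ∑ i, ((x i : ℕ) : ℤ) ≤ ∑ _i : Fin M, (NK : ℤ) :=
    Finset.sum_le_sum fun i _ => by exact_mod_cast Nat.cast_le.mpr (Fin.is_le (x i))
  simp only [Finset.sum_const, Finset.card_univ, Fintype.card_fin, nsmul_eq_mul] at hle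
  intro heq
  rw [heq] at hle
  linarith

lemma f_one_le (NK : ℕ) (n : ℤ) : f NK 1 n ≤ 1 := by
  rw [f]
  apply Finset.card_le_one.mpr
  intro x hx y hy
  simp only [Finset.mem_filter, Finset.mem_univ, true_and, Fin.sum_univ_one] at hx hy
  funext i
  have : ((x 0 : ℕ) : ℤ) = ((y 0 : ℕ) : ℤ) := by rw [hx, hy]
  have hxy : x 0 = y 0 := Fin.ext (by exact_mod_cast this)
  have : i = 0 := Subsingleton.elim i 0
  rw [this, hxy]


lemma f_diff (NK M : ℕ) (n : ℤ) :
    (f NK (M + 1) (n + 1) : ℤ) - f NK (M + 1) n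
      = (f NK M (n + 1) : ℤ) - f NK M (n - NK) := by
  rw [f_recur, f_recur]
  push_cast
  rw [← Finset.sum_sub_distrib]
  have hcongr : ∀ k ∈ Finset.range (NK + 1),
      ((f NK M (n + 1 - k) : ℤ) - (f NK M (n - k) : ℤ))
        = (fun j : ℕ => (f NK M (n + 1 - j) : ℤ)) k
          - (fun j : ℕ => (f NK M (n + 1 - j) : ℤ)) (k + 1) := by
    intro k _
    simp only []
    have : n - (k : ℤ) = n + 1 - ((k : ℕ) + 1 : ℕ) := by push_cast; ring
    rw [this]
  rw [Finset.sum_congr rfl hcongr, Finset.sum_range_sub']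
  have h1 : n + 1 - ((0 : ℕ) : ℤ) = n + 1 := by push_cast; ring
  have h2 : n + 1 - ((NK + 1 : ℕ) : ℤ) = n - NK := by push_cast; ring
  rw [h1, h2]

lemma f2_step (NK : ℕ) (x : ℤ) :
    (f NK 2 (x + 1) : ℤ) - f NK 2 x ≤ 1 ∧ -1 ≤ (f NK 2 (x + 1) : ℤ) - f NK 2 x := by
  have h := f_diff NK 1 x
  have h1 := f_one_le NK (x + 1)
  have h2 := f_one_le NK (x - NK)
  constructor <;> [skip; skip] <;>
  · rw [h]
    have := Nat.zero_le (f NK 1 (x + 1))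
    have := Nat.zero_le (f NK 1 (x - NK))
    omega

lemma f2_ge_left (NK : ℕ) (m : ℤ) (j : ℕ) :
    (f NK 2 m : ℤ) - j ≤ f NK 2 (m - j) := by
  induction j with
  | zero => simp
  | succ j ih =>
    have hstep := (f2_step NK (m - (j + 1 : ℕ))).1
    have : m - (j + 1 : ℕ) + 1 = m - j := by push_cast; ring
    rw [this] at hstep
    push_cast at ih hstep ⊢
    linarith

lemma f2_ge_right (NK : ℕ) (m : ℤ) (j : ℕ) :
    (f NK 2 m : ℤ) - j ≤ f NK 2 (m + j) := by
  induction j with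
  | zero => simp
  | succ j ih =>
    have hstep := (f2_step NK (m + j)).2
    have : m + (j : ℤ) + 1 = m + (j + 1 : ℕ) := by push_cast; ring
    rw [this] at hstep
    push_cast at ih hstep ⊢
    linarith

lemma gauss (c : ℤ) (d : ℕ) :
    2 * ∑ k ∈ Finset.range d, (c - k) = d * (2 * c - d + 1) := by
  induction d with
  | zero => simp
  | succ d ih =>
    rw [Finset.sum_range_succ]
    push_cast
    push_cast at ih
    ring_nf
    ring_nf at ih
    linarith

/-- window bound: if `g k ≥ c - k` termwise and `d ≤ NK+1`, `(d:ℤ) ≤ c`, `g ≥ 0`,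
then `2 * ∑_{k < NK+1} g k ≥ d * (d+1)`. -/
lemma window (NK : ℕ) (g : ℕ → ℤ) (hg0 : ∀ k, 0 ≤ g k) (c : ℤ)
    (hgk : ∀ k, c - k ≤ g k) (d : ℕ) (hd : d ≤ NK + 1) (hc : (d : ℤ) ≤ c) :
    (d : ℤ) * (d + 1) ≤ 2 * ∑ k ∈ Finset.range (NK + 1), g k := by
  have h1 : ∑ k ∈ Finset.range d, g k ≤ ∑ k ∈ Finset.range (NK + 1), g k :=
    Finset.sum_le_sum_of_subset_of_nonneg
      (Finset.range_subset_range.mpr hd) (fun i _ _ => hg0 i)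
  have h2 : ∑ k ∈ Finset.range d, ((d : ℤ) - k) ≤ ∑ k ∈ Finset.range d, g k := by
    apply Finset.sum_le_sum
    intro k _
    calc (d : ℤ) - k ≤ c - k := by linarith
      _ ≤ g k := hgk k
  have h3 := gauss (d : ℤ) d
  linarith

lemma key (NK : ℕ) (n : ℤ) :
    ((f NK 3 (n + 1) : ℤ) - f NK 3 n) ^ 2 ≤ (f NK 3 (n + 1) : ℤ) + f NK 3 n := by
  set a : ℤ := (f NK 2 (n + 1) : ℤ) with ha
  set b : ℤ := (f NK 2 (n - NK) : ℤ) with hb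
  have hdiff : (f NK 3 (n + 1) : ℤ) - f NK 3 n = a - b := f_diff NK 2 n
  have ha0 : 0 ≤ a := Int.ofNat_nonneg _
  have hb0 : 0 ≤ b := Int.ofNat_nonneg _
  have hP : (f NK 3 (n + 1) : ℤ) = ∑ k ∈ Finset.range (NK + 1), (f NK 2 (n + 1 - k) : ℤ) := by
    rw [show (3 : ℕ) = 2 + 1 from rfl, f_recur]
    push_cast
    apply Finset.sum_congr rfl
    intro k _
    norm_num
  have hQ : (f NK 3 n : ℤ) = ∑ k ∈ Finset.range (NK + 1), (f NK 2 (n - k) : ℤ) := by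
    rw [show (3 : ℕ) = 2 + 1 from rfl, f_recur]
    push_cast
    rfl
  rcases le_or_gt b a with hab | hab
  · -- D = a - b ≥ 0
    set d : ℕ := (a - b).toNat with hdd
    have hdval : (d : ℤ) = a - b := Int.toNat_of_nonneg (by linarith)
    have hdc : (d : ℤ) ≤ a := by linarith
    have hdN : d ≤ NK + 1 := by
      have := f2_ge_left NK (n + 1) (NK + 1)
      have he : n + 1 - ((NK + 1 : ℕ) : ℤ) = n - NK := by push_cast; ring
      rw [he] at this
      push_cast at this
      omega
    rcases Nat.eq_zero_or_pos d with hd0 | hd0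
    · have : a - b = 0 := by omega
      rw [hdiff, this]
      positivity
    -- P bound with c = a, d
    have hPb : (d : ℤ) * (d + 1) ≤ 2 * (f NK 3 (n + 1) : ℤ) := by
      rw [hP]
      apply window NK _ (fun k => Int.ofNat_nonneg _) a _ d hdN hdc
      intro k
      have := f2_ge_left NK (n + 1) k
      linarith
    -- Q bound with c = a - 1, d - 1
    have hQb : ((d - 1 : ℕ) : ℤ) * ((d - 1 : ℕ) + 1) ≤ 2 * (f NK 3 n : ℤ) := by
      rw [hQ]
      apply window NK _ (fun k => Int.ofNat_nonneg _) (a - 1) _ (d - 1) (by omega)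
        (by push_cast; omega)
      intro k
      have := f2_ge_left NK (n + 1) (k + 1)
      have he : n + 1 - ((k + 1 : ℕ) : ℤ) = n - k := by push_cast; ring
      rw [he] at this
      push_cast at this ⊢
      linarith
    rw [hdiff]
    have hd1 : ((d - 1 : ℕ) : ℤ) = (d : ℤ) - 1 := by omega
    rw [hd1] at hQb
    have hsq : (a - b) ^ 2 = (d : ℤ) * (d : ℤ) := by rw [← hdval]; ring
    rw [hsq]
    linarith
  · -- D = a - b < 0
    set d : ℕ := (b - a).toNat with hdd
    have hdval : (d : ℤ) = b - a := Int.toNat_of_nonneg (by linarith)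
    have hdc : (d : ℤ) ≤ b := by linarith
    have hdN : d ≤ NK + 1 := by
      have := f2_ge_right NK (n - NK) (NK + 1)
      have he : n - NK + ((NK + 1 : ℕ) : ℤ) = n + 1 := by push_cast; ring
      rw [he] at this
      push_cast at this
      omega
    have hQrefl : ∑ k ∈ Finset.range (NK + 1), (f NK 2 (n - k) : ℤ)
        = ∑ k ∈ Finset.range (NK + 1), (f NK 2 (n - NK + k) : ℤ) := by
      rw [← Finset.sum_range_reflect]
      apply Finset.sum_congr rfl
      intro k hk
      simp only [Finset.mem_range] at hk
      congr 1
      have : ((NK + 1 - 1 - k : ℕ) : ℤ) = (NK : ℤ) - k := by omega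
      rw [this]
      ring
    have hPrefl : ∑ k ∈ Finset.range (NK + 1), (f NK 2 (n + 1 - k) : ℤ)
        = ∑ k ∈ Finset.range (NK + 1), (f NK 2 (n - NK + (k + 1 : ℕ)) : ℤ) := by
      rw [← Finset.sum_range_reflect]
      apply Finset.sum_congr rfl
      intro k hk
      simp only [Finset.mem_range] at hk
      congr 1
      have : ((NK + 1 - 1 - k : ℕ) : ℤ) = (NK : ℤ) - k := by omega
      rw [this]
      push_cast
      ring
    -- Q bound with c = b, d
    have hQb : (d : ℤ) * (d + 1) ≤ 2 * (f NK 3 n : ℤ) := by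
      rw [hQ, hQrefl]
      apply window NK _ (fun k => Int.ofNat_nonneg _) b _ d hdN hdc
      intro k
      have := f2_ge_right NK (n - NK) k
      linarith
    -- P bound with c = b - 1, d - 1
    have hPb : ((d - 1 : ℕ) : ℤ) * ((d - 1 : ℕ) + 1) ≤ 2 * (f NK 3 (n + 1) : ℤ) := by
      rw [hP, hPrefl]
      apply window NK _ (fun k => Int.ofNat_nonneg _) (b - 1) _ (d - 1) (by omega)
        (by push_cast; omega)
      intro k
      have := f2_ge_right NK (n - NK) (k + 1)
      push_cast at this ⊢
      linarith
    rw [hdiff]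
    have hd1 : ((d - 1 : ℕ) : ℤ) = (d : ℤ) - 1 ∨ d = 0 := by omega
    rcases hd1 with hd1 | hd1
    · rw [hd1] at hPb
      have hsq : (a - b) ^ 2 = (d : ℤ) * (d : ℤ) := by
        have : a - b = -(d : ℤ) := by linarith
        rw [this]; ring
      rw [hsq]
      linarith
    · have : a - b = 0 := by omega
      rw [this]
      have := Int.ofNat_nonneg (f NK 3 (n + 1))
      have := Int.ofNat_nonneg (f NK 3 n)
      simp
      omega

noncomputable def J (NK M : ℕ) : ℝ :=
  ∑ n ∈ Finset.Icc (-1 : ℤ) ((M : ℤ) * NK), t (f NK M (n + 1)) (f NK M n)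

lemma t_term_zero (NK M : ℕ) {m : ℤ} (hm : m ∉ Finset.Icc (-1 : ℤ) ((M : ℤ) * NK)) :
    t (f NK M (m + 1)) (f NK M m) = 0 := by
  simp only [Finset.mem_Icc, not_and_or, not_le] at hm
  have hz : f NK M (m + 1) = 0 ∧ f NK M m = 0 := by
    rcases hm with hm | hm
    · exact ⟨f_zero_of_neg NK M (by omega), f_zero_of_neg NK M (by omega)⟩
    · exact ⟨f_zero_of_gt NK M (by omega), f_zero_of_gt NK M (by omega)⟩
  rw [hz.1, hz.2]
  simp [t]

lemma J_eq_sum (NK M : ℕ) (s : Finset ℤ) (hs : Finset.Icc (-1 : ℤ) ((M : ℤ) * NK) ⊆ s) :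
    ∑ n ∈ s, t (f NK M (n + 1)) (f NK M n) = J NK M := by
  rw [J]
  exact (Finset.sum_subset hs (fun x _ hx => t_term_zero NK M hx)).symm

lemma J_succ_le (NK M : ℕ) : J NK (M + 1) ≤ (NK + 1 : ℝ) * J NK M := by
  rw [J]
  have hstep : ∀ n ∈ Finset.Icc (-1 : ℤ) (((M : ℤ) + 1) * NK),
      t (f NK (M + 1) (n + 1)) (f NK (M + 1) n)
        ≤ ∑ k ∈ Finset.range (NK + 1), t (f NK M (n - k + 1)) (f NK M (n - k)) := by
    intro n _
    have h1 : f NK (M + 1) (n + 1) = ∑ k ∈ Finset.range (NK + 1), f NK M (n - k + 1) := by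
      rw [f_recur]
      apply Finset.sum_congr rfl
      intro k _
      congr 1
      ring
    have h2 : f NK (M + 1) n = ∑ k ∈ Finset.range (NK + 1), f NK M (n - k) := f_recur NK M n
    rw [h1, h2]
    exact t_sum_le _ _ _
  have hM1 : ((M + 1 : ℕ) : ℤ) * NK = ((M : ℤ) + 1) * NK := by push_cast; ring
  rw [hM1]
  calc ∑ n ∈ Finset.Icc (-1 : ℤ) (((M : ℤ) + 1) * NK),
        t (f NK (M + 1) (n + 1)) (f NK (M + 1) n)
      ≤ ∑ n ∈ Finset.Icc (-1 : ℤ) (((M : ℤ) + 1) * NK),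
        ∑ k ∈ Finset.range (NK + 1), t (f NK M (n - k + 1)) (f NK M (n - k)) :=
        Finset.sum_le_sum hstep
    _ = ∑ k ∈ Finset.range (NK + 1), ∑ n ∈ Finset.Icc (-1 : ℤ) (((M : ℤ) + 1) * NK),
        t (f NK M (n - k + 1)) (f NK M (n - k)) := Finset.sum_comm
    _ = ∑ k ∈ Finset.range (NK + 1), J NK M := by
        apply Finset.sum_congr rfl
        intro k hk
        simp only [Finset.mem_range] at hk
        have hre : ∑ n ∈ Finset.Icc (-1 : ℤ) (((M : ℤ) + 1) * NK),
            t (f NK M (n - k + 1)) (f NK M (n - k))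
            = ∑ m ∈ Finset.Icc (-1 - (k : ℤ)) (((M : ℤ) + 1) * NK - k),
            t (f NK M (m + 1)) (f NK M m) := by
          rw [show Finset.Icc (-1 - (k : ℤ)) (((M : ℤ) + 1) * NK - k)
              = Finset.map (addRightEmbedding (-(k : ℤ))) (Finset.Icc (-1) (((M : ℤ) + 1) * NK))
              from by rw [Finset.map_add_right_Icc]; congr 1 <;> ring]
          rw [Finset.sum_map]
          apply Finset.sum_congr rfl
          intro n _
          simp only [addRightEmbedding_apply]
          congr 2 <;> ring
        rw [hre]
        apply J_eq_sum
        apply Finset.Icc_subset_Icc <;> [omega; skip]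
        have : (k : ℤ) ≤ NK := by exact_mod_cast Nat.lt_succ_iff.mp hk
        nlinarith [Int.ofNat_nonneg M, Int.ofNat_nonneg NK]
    _ = (NK + 1 : ℝ) * J NK M := by
        rw [Finset.sum_const, Finset.card_range, nsmul_eq_mul]
        push_cast
        ring

lemma J3_le (NK : ℕ) : J NK 3 ≤ 3 * (NK : ℝ) + 2 := by
  rw [J]
  have h3 : (((3 : ℕ) : ℤ)) * NK = (3 : ℤ) * NK := by norm_num
  rw [h3]
  have hterm : ∀ n ∈ Finset.Icc (-1 : ℤ) ((3 : ℤ) * NK),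
      t (f NK 3 (n + 1)) (f NK 3 n) ≤ 1 := by
    intro n _
    rw [t]
    split
    · norm_num
    · rename_i hne
      have hpos : (0 : ℝ) < (f NK 3 (n + 1) : ℝ) + (f NK 3 n : ℝ) := by
        have : 0 < f NK 3 (n + 1) + f NK 3 n := Nat.pos_of_ne_zero hne
        have : (0:ℝ) < ((f NK 3 (n + 1) + f NK 3 n : ℕ) : ℝ) := by exact_mod_cast this
        push_cast at this
        linarith
      rw [div_le_one hpos]
      exact_mod_cast key NK n
  calc ∑ n ∈ Finset.Icc (-1 : ℤ) ((3 : ℤ) * NK), t (f NK 3 (n + 1)) (f NK 3 n)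
      ≤ (Finset.Icc (-1 : ℤ) ((3 : ℤ) * NK)).card • (1 : ℝ) :=
        Finset.sum_le_card_nsmul _ _ _ hterm
    _ = ((Finset.Icc (-1 : ℤ) ((3 : ℤ) * NK)).card : ℝ) := by rw [nsmul_eq_mul, mul_one]
    _ = 3 * (NK : ℝ) + 2 := by
        have hcard : (Finset.Icc (-1 : ℤ) ((3 : ℤ) * NK)).card = 3 * NK + 2 := by
          rw [Int.card_Icc]
          have : (3 : ℤ) * NK + 1 - (-1) = ((3 * NK + 2 : ℕ) : ℤ) := by push_cast; ring
          rw [this, Int.toNat_natCast]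
        rw [hcard]
        push_cast
        ring

lemma J_le (NK : ℕ) (d : ℕ) : J NK (3 + d) ≤ (3 * (NK : ℝ) + 2) * ((NK : ℝ) + 1) ^ d := by
  induction d with
  | zero => simpa using J3_le NK
  | succ d ih =>
    have h1 : J NK (3 + (d + 1)) = J NK ((3 + d) + 1) := by norm_num; ring_nf
    rw [h1]
    calc J NK ((3 + d) + 1) ≤ (NK + 1 : ℝ) * J NK (3 + d) := J_succ_le NK (3 + d)
      _ ≤ (NK + 1 : ℝ) * ((3 * (NK : ℝ) + 2) * ((NK : ℝ) + 1) ^ d) := by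
          apply mul_le_mul_of_nonneg_left ih (by positivity)
      _ = (3 * (NK : ℝ) + 2) * ((NK : ℝ) + 1) ^ (d + 1) := by ring
end Stmt8

/-- For `M ≥ 3`, the sum `Σ_{n=−1}^{M·N_K} (f_M(n+1) − f_M(n))² / (f_M(n+1) + f_M(n))`
(each term interpreted as 0 when the denominator vanishes) is at most
`M! · (N_K + 1)^(M−2)`. -/
theorem stmt8 (NK : ℕ) (hNK : 0 < NK) (M : ℕ) (hM : 3 ≤ M) :
    (∑ i ∈ Finset.range (M * NK + 2),
      (if f NK M ((i : ℤ) - 1 + 1) + f NK M ((i : ℤ) - 1) = 0 then (0 : ℝ)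
        else ((f NK M ((i : ℤ) - 1 + 1) : ℝ) - (f NK M ((i : ℤ) - 1) : ℝ)) ^ 2 /
          ((f NK M ((i : ℤ) - 1 + 1) : ℝ) + (f NK M ((i : ℤ) - 1) : ℝ))))
    ≤ (Nat.factorial M : ℝ) * ((NK : ℝ) + 1) ^ (M - 2) := by
  have hteq : ∀ a b : ℕ,
      (if a + b = 0 then (0 : ℝ) else ((a : ℝ) - (b : ℝ)) ^ 2 / ((a : ℝ) + (b : ℝ)))
        = Stmt8.t a b := fun a b => rfl
  have hmap : Finset.Icc (-1 : ℤ) ((M : ℤ) * NK)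
      = (Finset.range (M * NK + 2)).map
        ⟨fun i : ℕ => (i : ℤ) - 1, @id (Function.Injective _) (fun a b h => by simpa using h)⟩ := by
    have hc : (M : ℤ) * NK = ((M * NK : ℕ) : ℤ) := by push_cast; ring
    rw [hc]
    ext x
    simp only [Finset.mem_Icc, Finset.mem_map, Finset.mem_range, Function.Embedding.coeFn_mk]
    constructor
    · rintro ⟨h1, h2⟩
      refine ⟨(x + 1).toNat, by omega, by omega⟩
    · rintro ⟨i, hi, rfl⟩
      omega
  have hsum : (∑ i ∈ Finset.range (M * NK + 2),
      (if f NK M ((i : ℤ) - 1 + 1) + f NK M ((i : ℤ) - 1) = 0 then (0 : ℝ)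
        else ((f NK M ((i : ℤ) - 1 + 1) : ℝ) - (f NK M ((i : ℤ) - 1) : ℝ)) ^ 2 /
          ((f NK M ((i : ℤ) - 1 + 1) : ℝ) + (f NK M ((i : ℤ) - 1) : ℝ))))
      = Stmt8.J NK M := by
    rw [Stmt8.J, hmap, Finset.sum_map]
    apply Finset.sum_congr rfl
    intro i _
    simp only [Function.Embedding.coeFn_mk]
    exact hteq _ _
  rw [hsum]
  obtain ⟨d, rfl⟩ : ∃ d, M = 3 + d := ⟨M - 3, by omega⟩
  calc Stmt8.J NK (3 + d) ≤ (3 * (NK : ℝ) + 2) * ((NK : ℝ) + 1) ^ d := Stmt8.J_le NK d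
    _ ≤ (6 * ((NK : ℝ) + 1)) * ((NK : ℝ) + 1) ^ d := by
        have h1 : (3 * (NK : ℝ) + 2) ≤ 6 * ((NK : ℝ) + 1) := by
          have : (0:ℝ) ≤ (NK : ℝ) := Nat.cast_nonneg NK
          linarith
        apply mul_le_mul_of_nonneg_right h1 (by positivity)
    _ = 6 * ((NK : ℝ) + 1) ^ (d + 1) := by ring
    _ ≤ (Nat.factorial (3 + d) : ℝ) * ((NK : ℝ) + 1) ^ (3 + d - 2) := by
        have hfac : (6 : ℝ) ≤ (Nat.factorial (3 + d) : ℝ) := by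
          have : Nat.factorial 3 ≤ Nat.factorial (3 + d) := Nat.factorial_le (by omega)
          exact_mod_cast this
        have hd2 : 3 + d - 2 = d + 1 := by omega
        rw [hd2]
        apply mul_le_mul_of_nonneg_right hfac (by positivity)
end

section
/- (Theorem 1, case M > 2, quantitative form.) For every integer M ≥ 3, the canonical Collett phase variance of M copies of the equal superposition state satisfies V_C(M, N_K) := (1/(N_K + 1)^M) · Σ_{n=−1}^{M·N_K} (√(f_M(n+1)) − √(f_M(n)))² ≤ M! / (N_K + 1)². In particular, for fixed M > 2 this variance is O(1/N_K²), the Heisenberg-limited scaling. -/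
lemma f_zero (NK : ℕ) (n : ℤ) : f NK 0 n = if n = 0 then 1 else 0 := by
  unfold f
  simp only [Finset.sum_empty, Fin.sum_univ_zero]
  by_cases h : n = 0 <;> simp [h, Finset.filter_true_of_mem, Finset.filter_false_of_mem, eq_comm]

lemma f_vanish (NK M : ℕ) (n : ℤ) (h : n < 0 ∨ (M*NK : ℤ) < n) : f NK M n = 0 := by
  unfold f
  rw [Finset.card_eq_zero, Finset.filter_eq_empty_iff]
  intro t _
  intro hs
  have h1 : (0:ℤ) ≤ ∑ i, ((t i : ℕ) : ℤ) := Finset.sum_nonneg fun i _ => Int.natCast_nonneg _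
  have h2 : ∑ i, ((t i : ℕ) : ℤ) ≤ ∑ _i : Fin M, (NK : ℤ) := by
    apply Finset.sum_le_sum
    intro i _
    exact_mod_cast Int.ofNat_le.mpr (Nat.lt_succ_iff.mp (t i).isLt)
  simp only [Finset.sum_const, Finset.card_univ, Fintype.card_fin, nsmul_eq_mul] at h2
  omega

lemma f_peel (NK M : ℕ) (n : ℤ) :
    f NK (M+1) n = ∑ j ∈ Finset.range (NK+1), f NK M (n - j) := by
  unfold f
  rw [← Fin.sum_univ_eq_sum_range (fun j => (Finset.univ.filter
      (fun t : Fin M → Fin (NK + 1) => (∑ i, ((t i : ℕ) : ℤ)) = n - j)).card)]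
  rw [Finset.card_eq_sum_card_fiberwise
      (f := fun t : Fin (M+1) → Fin (NK+1) => t 0) (t := Finset.univ)
      (fun x _ => Finset.mem_univ _)]
  apply Finset.sum_congr rfl
  intro j _
  apply Finset.card_bij (fun t _ => Fin.tail t)
  · intro t ht
    simp only [Finset.mem_filter, Finset.mem_univ, true_and] at ht ⊢
    obtain ⟨hsum, h0⟩ := ht
    rw [Fin.sum_univ_succ] at hsum
    rw [← hsum, h0]
    simp only [Fin.tail]
    ring
  · intro a ha b hb hab
    simp only [Finset.mem_filter, Finset.mem_univ, true_and] at ha hb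
    have : Fin.cons (a 0) (Fin.tail a) = Fin.cons (b 0) (Fin.tail b) := by
      rw [hab, ha.2, hb.2]
    rwa [Fin.cons_self_tail, Fin.cons_self_tail] at this
  · intro s hs
    simp only [Finset.mem_filter, Finset.mem_univ, true_and] at hs
    refine ⟨Fin.cons j s, ?_, ?_⟩
    · simp only [Finset.mem_filter, Finset.mem_univ, true_and]
      constructor
      · rw [Fin.sum_univ_succ]
        simp only [Fin.cons_zero, Fin.cons_succ]
        rw [hs]; ring
      · simp
    · simp [Fin.tail]

lemma f_total (NK M : ℕ) :
    ∑ v ∈ Finset.range (M*NK+1), f NK M (v : ℤ) = (NK+1)^M := by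
  have := Finset.card_eq_sum_card_fiberwise
      (f := fun t : Fin M → Fin (NK+1) => (∑ i, (t i : ℕ)))
      (s := Finset.univ) (t := Finset.range (M*NK+1)) ?_
  · rw [Finset.card_univ, Fintype.card_fun, Fintype.card_fin, Fintype.card_fin] at this
    rw [this]
    apply Finset.sum_congr rfl
    intro v _
    unfold f
    congr 1
    apply Finset.filter_congr
    intro t _
    constructor
    · intro h
      have : ((∑ i, (t i : ℕ) : ℕ) : ℤ) = (v : ℤ) := by push_cast; exact h
      exact_mod_cast this
    · intro h
      push_cast [← h]
      rfl
  · intro t _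
    rw [Finset.mem_coe, Finset.mem_range, Nat.lt_succ_iff]
    calc ∑ i, (t i : ℕ) ≤ ∑ _i : Fin M, NK :=
          Finset.sum_le_sum fun i _ => Nat.lt_succ_iff.mp (t i).isLt
      _ = M * NK := by simp [Finset.sum_const, mul_comm]

lemma f_conv (NK A B : ℕ) (m : ℤ) :
    f NK (A+B) m = ∑ v ∈ Finset.range (A*NK+1), f NK A v * f NK B (m - v) := by
  induction B generalizing m with
  | zero =>
    simp only [Nat.add_zero, f_zero]
    by_cases h : m < 0 ∨ (A*NK : ℤ) < m
    · rw [f_vanish NK A m h, Finset.sum_eq_zero]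
      intro v hv
      rw [Finset.mem_range, Nat.lt_succ_iff] at hv
      have : ¬ (m - (v:ℤ) = 0) := by
        rcases h with h | h
        · omega
        · have : (v : ℤ) ≤ (A*NK : ℕ) := by exact_mod_cast hv
          push_cast at this ⊢
          omega
      simp [this]
    · push_neg at h
      have h0 : (0:ℤ) ≤ m := h.1
      have key : ∀ v ∈ Finset.range (A*NK+1),
          f NK A v * (if m - (v:ℤ) = 0 then 1 else 0)
          = if v = m.toNat then f NK A v else 0 := by
        intro v _
        by_cases hv : (v:ℤ) = m
        · have hvt : v = m.toNat := by omega
          rw [if_pos (by omega : m - (v:ℤ) = 0), if_pos hvt, mul_one]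
        · have h1 : ¬ (m - (v:ℤ) = 0) := by omega
          have h2 : ¬ (v = m.toNat) := by omega
          simp [h1, h2]
      rw [Finset.sum_congr rfl key, Finset.sum_ite_eq' (Finset.range (A*NK+1))]
      have hmem : m.toNat ∈ Finset.range (A*NK+1) := by
        rw [Finset.mem_range, Nat.lt_succ_iff]
        have := h.2; push_cast at this; omega
      rw [if_pos hmem]
      congr 1
      omega
  | succ B ih =>
    rw [show A + (B+1) = (A+B)+1 from rfl, f_peel]
    have step : ∀ j ∈ Finset.range (NK+1),
        f NK (A+B) (m - (j:ℤ)) = ∑ v ∈ Finset.range (A*NK+1),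
          f NK A v * f NK B (m - (j:ℤ) - v) := fun j _ => ih _
    rw [Finset.sum_congr rfl step, Finset.sum_comm]
    apply Finset.sum_congr rfl
    intro v _
    rw [f_peel, Finset.mul_sum]
    apply Finset.sum_congr rfl
    intro j _
    congr 2
    ring

lemma rev_sum (NK M : ℕ) (t : Fin M → Fin (NK+1)) :
    (∑ i, (((t i).rev : ℕ) : ℤ)) = M*NK - ∑ i, ((t i : ℕ) : ℤ) := by
  rw [show (M*NK : ℤ) = ∑ _i : Fin M, (NK : ℤ) by
      simp [Finset.sum_const, Finset.card_univ, mul_comm]]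
  rw [← Finset.sum_sub_distrib]
  apply Finset.sum_congr rfl
  intro i _
  have h1 : ((t i).rev : ℕ) = NK - (t i : ℕ) := by
    simp [Fin.val_rev]
  rw [h1, Nat.cast_sub (Nat.lt_succ_iff.mp (t i).isLt)]

lemma f_symm (NK M : ℕ) (n : ℤ) : f NK M n = f NK M (M*NK - n) := by
  unfold f
  apply Finset.card_bij (fun t _ => fun i => (t i).rev)
  · intro t ht
    simp only [Finset.mem_filter, Finset.mem_univ, true_and] at ht ⊢
    rw [rev_sum, ht]
  · intro a ha b hb hab
    funext i
    have := congrFun hab i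
    simpa [Fin.rev_inj] using this
  · intro s hs
    simp only [Finset.mem_filter, Finset.mem_univ, true_and] at hs
    refine ⟨fun i => (s i).rev, ?_, ?_⟩
    · simp only [Finset.mem_filter, Finset.mem_univ, true_and]
      rw [rev_sum, hs]
      ring
    · funext i; simp

lemma f_two_sq (NK : ℕ) (x : ℤ) : f NK 2 x * f NK 2 x ≤ 2 * f NK 3 x := by
  classical
  unfold f
  set A := Finset.univ.filter
    (fun t : Fin 2 → Fin (NK+1) => (∑ i, ((t i : ℕ):ℤ)) = x) with hA
  set B := Finset.univ.filter
    (fun t : Fin 3 → Fin (NK+1) => (∑ i, ((t i : ℕ):ℤ)) = x) with hB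
  have memA : ∀ t : Fin 2 → Fin (NK+1), t ∈ A ↔ ((t 0 : ℕ):ℤ) + ((t 1 : ℕ):ℤ) = x := by
    intro t; simp [hA, Fin.sum_univ_two]
  have memB : ∀ t : Fin 3 → Fin (NK+1),
      t ∈ B ↔ ((t 0 : ℕ):ℤ) + ((t 1 : ℕ):ℤ) + ((t 2 : ℕ):ℤ) = x := by
    intro t; simp [hB, Fin.sum_univ_three]
  rw [← Finset.card_product]
  rw [← Finset.card_filter_add_card_filter_not
    (p := fun p : (Fin 2 → Fin (NK+1)) × (Fin 2 → Fin (NK+1)) =>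
      ((p.1 0 : ℕ) ≤ (p.2 0 : ℕ))) (s := A ×ˢ A), two_mul]
  have key : ∀ (S : Finset ((Fin 2 → Fin (NK+1)) × (Fin 2 → Fin (NK+1))))
      (σ : Bool), (∀ p ∈ S, p ∈ A ×ˢ A ∧
        ((σ = true → (p.1 0 : ℕ) ≤ (p.2 0 : ℕ)) ∧
         (σ = false → (p.2 0 : ℕ) ≤ (p.1 0 : ℕ)))) → S.card ≤ B.card := by
    intro S σ hS
    -- for σ = true use (p.1, p.2); for σ = false swap roles
    apply Finset.card_le_card_of_injOn
      (fun p => if σ then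
          ![p.1 0, p.2 1, ⟨(p.2 0 : ℕ) - (p.1 0 : ℕ), by omega⟩]
        else
          ![p.2 0, p.1 1, ⟨(p.1 0 : ℕ) - (p.2 0 : ℕ), by omega⟩])
    · intro p hp
      obtain ⟨hpAA, hle⟩ := hS p hp
      rw [Finset.mem_product] at hpAA
      have h1 := (memA _).mp hpAA.1
      have h2 := (memA _).mp hpAA.2
      cases σ with
      | true =>
        have hle' := hle.1 rfl
        simp only [Finset.mem_coe]
        rw [if_pos trivial, memB]
        simp only [Matrix.cons_val_zero, Matrix.cons_val_one, Matrix.head_cons,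
          Matrix.cons_val_two, Matrix.tail_cons]
        rw [Nat.cast_sub hle']
        push_cast at h1 h2 ⊢
        omega
      | false =>
        have hle' := hle.2 rfl
        simp only [Finset.mem_coe]
        rw [if_neg (by simp : ¬ (false = true)), memB]
        simp only [Matrix.cons_val_zero, Matrix.cons_val_one, Matrix.head_cons,
          Matrix.cons_val_two, Matrix.tail_cons]
        rw [Nat.cast_sub hle']
        push_cast at h1 h2 ⊢
        omega
    · intro p hp q hq heq
      obtain ⟨hpAA, hlep⟩ := hS p hp
      obtain ⟨hqAA, hleq⟩ := hS q hq
      rw [Finset.mem_product] at hpAA hqAA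
      have hp1 := (memA _).mp hpAA.1
      have hp2 := (memA _).mp hpAA.2
      have hq1 := (memA _).mp hqAA.1
      have hq2 := (memA _).mp hqAA.2
      -- extract component equalities
      cases σ with
      | true =>
        simp only [reduceIte] at heq
        have hlep' := hlep.1 rfl
        have hleq' := hleq.1 rfl
        have e0 : ((p.1 0 : ℕ) : ℤ) = ((q.1 0 : ℕ) : ℤ) := by
          have := congrFun heq 0; simp only [Matrix.cons_val_zero] at this
          exact_mod_cast congrArg Fin.val this
        have e1 : ((p.2 1 : ℕ) : ℤ) = ((q.2 1 : ℕ) : ℤ) := by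
          have := congrFun heq 1
          simp only [Matrix.cons_val_one, Matrix.head_cons] at this
          exact_mod_cast congrArg Fin.val this
        have e2 : ((p.2 0 : ℕ) - (p.1 0 : ℕ) : ℕ) = ((q.2 0 : ℕ) - (q.1 0 : ℕ) : ℕ) := by
          have := congrFun heq 2
          simp only [Matrix.cons_val_two, Matrix.tail_cons] at this
          exact congrArg Fin.val this
        have v10 : (p.1 0 : ℕ) = (q.1 0 : ℕ) := by exact_mod_cast e0
        have v21 : (p.2 1 : ℕ) = (q.2 1 : ℕ) := by exact_mod_cast e1
        have v20 : (p.2 0 : ℕ) = (q.2 0 : ℕ) := by omega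
        have v11 : ((p.1 1 : ℕ) : ℤ) = ((q.1 1 : ℕ) : ℤ) := by omega
        refine Prod.ext ?_ ?_ <;> funext i <;> fin_cases i
        · exact Fin.val_injective v10
        · exact Fin.val_injective (by exact_mod_cast v11)
        · exact Fin.val_injective v20
        · exact Fin.val_injective v21
      | false =>
        simp only [reduceIte, Bool.false_eq_true] at heq
        have hlep' := hlep.2 rfl
        have hleq' := hleq.2 rfl
        have e0 : ((p.2 0 : ℕ) : ℤ) = ((q.2 0 : ℕ) : ℤ) := by
          have := congrFun heq 0; simp only [Matrix.cons_val_zero] at this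
          exact_mod_cast congrArg Fin.val this
        have e1 : ((p.1 1 : ℕ) : ℤ) = ((q.1 1 : ℕ) : ℤ) := by
          have := congrFun heq 1
          simp only [Matrix.cons_val_one, Matrix.head_cons] at this
          exact_mod_cast congrArg Fin.val this
        have e2 : ((p.1 0 : ℕ) - (p.2 0 : ℕ) : ℕ) = ((q.1 0 : ℕ) - (q.2 0 : ℕ) : ℕ) := by
          have := congrFun heq 2
          simp only [Matrix.cons_val_two, Matrix.tail_cons] at this
          exact congrArg Fin.val this
        have v20 : (p.2 0 : ℕ) = (q.2 0 : ℕ) := by exact_mod_cast e0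
        have v11 : (p.1 1 : ℕ) = (q.1 1 : ℕ) := by exact_mod_cast e1
        have v10 : (p.1 0 : ℕ) = (q.1 0 : ℕ) := by omega
        have v21 : ((p.2 1 : ℕ) : ℤ) = ((q.2 1 : ℕ) : ℤ) := by omega
        refine Prod.ext ?_ ?_ <;> funext i <;> fin_cases i
        · exact Fin.val_injective v10
        · exact Fin.val_injective v11
        · exact Fin.val_injective v20
        · exact Fin.val_injective (by exact_mod_cast v21)
  apply add_le_add
  · apply key _ true
    intro p hp
    rw [Finset.mem_filter] at hp
    exact ⟨hp.1, fun _ => hp.2, by simp⟩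
  · apply key _ false
    intro p hp
    rw [Finset.mem_filter] at hp
    refine ⟨hp.1, by simp, fun _ => le_of_not_ge hp.2⟩

lemma f_claim (NK k : ℕ) (x : ℤ) :
    ((f NK (k+2) x : ℝ))^2 ≤ 2*((NK:ℝ)+1)^k * (f NK (k+3) x) := by
  rw [f_conv NK k 2 x, f_conv NK k 3 x]
  push_cast
  calc (∑ v ∈ Finset.range (k*NK+1), (f NK k v : ℝ) * (f NK 2 (x - v) : ℝ))^2
      ≤ (∑ v ∈ Finset.range (k*NK+1), (f NK k v : ℝ)) *
        (∑ v ∈ Finset.range (k*NK+1), (f NK k v : ℝ) * (f NK 2 (x - v) : ℝ)^2) := by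
        apply Finset.sum_sq_le_sum_mul_sum_of_sq_eq_mul
        · intro i _; positivity
        · intro i _; positivity
        · intro i _; ring
    _ ≤ ((NK:ℝ)+1)^k *
        (∑ v ∈ Finset.range (k*NK+1), (f NK k v : ℝ) * (2 * (f NK 3 (x - v) : ℝ))) := by
        have hfac : (∑ v ∈ Finset.range (k*NK+1), (f NK k v : ℝ)) = ((NK:ℝ)+1)^k := by
          have h0 := f_total NK k
          have h1 : ((∑ v ∈ Finset.range (k*NK+1), f NK k (v:ℤ) : ℕ) : ℝ)
              = (((NK+1)^k : ℕ) : ℝ) := by rw [h0]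
          push_cast at h1
          convert h1 using 2
        rw [hfac]
        gcongr with v hv
        · have h := f_two_sq NK (x - v)
          have h2 : ((f NK 2 (x-(v:ℤ)) : ℕ) : ℝ) * ((f NK 2 (x-(v:ℤ)) : ℕ) : ℝ) ≤
              2 * ((f NK 3 (x-(v:ℤ)) : ℕ) : ℝ) := by exact_mod_cast h
          nlinarith [h2]
    _ = 2*((NK:ℝ)+1)^k * (∑ v ∈ Finset.range (k*NK+1),
          (f NK k v : ℝ) * (f NK 3 (x - v) : ℝ)) := by
        rw [Finset.mul_sum, Finset.mul_sum]
        apply Finset.sum_congr rfl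
        intro v _; ring

lemma sqrt_term_le {a b c : ℝ} (ha : 0 ≤ a) (hb : 0 ≤ b) (hc : 0 ≤ c)
    (h : (a-b)^2 ≤ c*(a+b)) : (Real.sqrt a - Real.sqrt b)^2 ≤ c := by
  rcases eq_or_lt_of_le (add_nonneg ha hb) with heq | hpos
  · have ha0 : a = 0 := by linarith [ha, hb]
    have hb0 : b = 0 := by linarith [ha, hb]
    simp [ha0, hb0, hc]
  · have key : (Real.sqrt a - Real.sqrt b)^2 * (a+b) ≤ c * (a+b) := by
      calc (Real.sqrt a - Real.sqrt b)^2 * (a+b)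
          ≤ (Real.sqrt a - Real.sqrt b)^2 * (Real.sqrt a + Real.sqrt b)^2 := by
            apply mul_le_mul_of_nonneg_left _ (sq_nonneg _)
            have h1 : (Real.sqrt a + Real.sqrt b)^2
                = a + b + 2*(Real.sqrt a * Real.sqrt b) := by
              rw [add_sq, Real.sq_sqrt ha, Real.sq_sqrt hb]; ring
            nlinarith [Real.sqrt_nonneg a, Real.sqrt_nonneg b,
              mul_nonneg (Real.sqrt_nonneg a) (Real.sqrt_nonneg b)]
        _ = ((Real.sqrt a - Real.sqrt b) * (Real.sqrt a + Real.sqrt b))^2 := by ring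
        _ = (a - b)^2 := by
            have hprod : (Real.sqrt a - Real.sqrt b) * (Real.sqrt a + Real.sqrt b)
                = a - b := by
              have h2 := Real.sq_sqrt ha
              have h3 := Real.sq_sqrt hb
              nlinarith [h2, h3]
            rw [hprod]
        _ ≤ c * (a+b) := h
    exact le_of_mul_le_mul_right key hpos

lemma f_diff (NK K : ℕ) (n : ℤ) :
    f NK (K+1) (n+1) + f NK K (n - NK) = f NK (K+1) n + f NK K (n+1) := by
  rw [f_peel NK K (n+1), f_peel NK K n,
    Finset.sum_range_succ' (fun j => f NK K (n+1 - j)) NK,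
    Finset.sum_range_succ (fun j => f NK K (n - j)) NK]
  have h3 : ∑ x ∈ Finset.range NK, f NK K (n+1-((x:ℤ)+1))
      = ∑ x ∈ Finset.range NK, f NK K (n - (x:ℤ)) :=
    Finset.sum_congr rfl (fun x _ => by congr 1; ring)
  push_cast
  rw [h3]
  ring

/-- Theorem 1, case `M > 2`, quantitative form: the canonical Collett phase variance
`V_C = (1/(N_K+1)^M) Σ_{n=−1}^{M·N_K} (√(f_M(n+1)) − √(f_M(n)))²` of `M ≥ 3` copies of
the equal superposition state is at most `M! / (N_K + 1)²` (Heisenberg-limited scaling). -/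
theorem stmt9 (NK : ℕ) (hNK : 0 < NK) (M : ℕ) (hM : 3 ≤ M) :
    (1 / ((NK : ℝ) + 1) ^ M) *
      (∑ i ∈ Finset.range (M * NK + 2),
        (Real.sqrt (f NK M ((i : ℤ) - 1 + 1)) - Real.sqrt (f NK M ((i : ℤ) - 1))) ^ 2)
    ≤ (Nat.factorial M : ℝ) / ((NK : ℝ) + 1) ^ 2 := by
  obtain ⟨k, rfl⟩ : ∃ k, M = k + 3 := ⟨M - 3, by omega⟩
  set P : ℝ := (NK : ℝ) + 1 with hP
  have hPpos : 0 < P := by positivity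
  set c : ℝ := 2 * P ^ k with hc
  have hcpos : 0 ≤ c := by positivity
  -- per-term bound
  have hterm : ∀ i ∈ Finset.range ((k+3) * NK + 2),
      (Real.sqrt (f NK (k+3) ((i : ℤ) - 1 + 1)) -
        Real.sqrt (f NK (k+3) ((i : ℤ) - 1))) ^ 2 ≤ c := by
    intro i _
    set n : ℤ := (i : ℤ) - 1 with hn
    apply sqrt_term_le (by positivity) (by positivity) hcpos
    set a : ℝ := (f NK (k+3) (n+1) : ℝ) with ha
    set b : ℝ := (f NK (k+3) n : ℝ) with hb
    set A : ℝ := (f NK (k+2) (n+1) : ℝ) with hA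
    set B : ℝ := (f NK (k+2) (n - NK) : ℝ) with hB
    have hdiff : a - b = A - B := by
      have hd : f NK (k+3) (n+1) + f NK (k+2) (n-NK)
          = f NK (k+3) n + f NK (k+2) (n+1) := f_diff NK (k+2) n
      have hr : a + B = b + A := by rw [ha, hb, hA, hB]; exact_mod_cast hd
      linarith
    have hA2 : A^2 ≤ c * a := f_claim NK k (n+1)
    have hB2 : B^2 ≤ c * b := by
      have hsym : f NK (k+2) (n - NK) = f NK (k+2) ((k+3)*NK - n) := by
        rw [f_symm NK (k+2) (n - NK)]
        congr 1
        push_cast; ring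
      have hsym2 : f NK (k+3) ((k+3)*NK - n) = f NK (k+3) n := by
        rw [f_symm NK (k+3) ((k+3)*NK - n)]
        congr 1
        push_cast; ring
      have hcl := f_claim NK k (((k:ℤ)+3)*NK - n)
      rw [hsym2] at hcl
      calc B^2 = ((f NK (k+2) (((k:ℤ)+3)*NK - n) : ℝ))^2 := by rw [hB, hsym]
        _ ≤ c * b := hcl
    have hABnn : 0 ≤ A * B := by positivity
    calc (a - b)^2 = (A - B)^2 := by rw [hdiff]
      _ ≤ A^2 + B^2 := by nlinarith [hABnn]
      _ ≤ c * a + c * b := add_le_add hA2 hB2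
      _ = c * (a + b) := by ring
  have hsum : (∑ i ∈ Finset.range ((k+3) * NK + 2),
      (Real.sqrt (f NK (k+3) ((i : ℤ) - 1 + 1)) -
        Real.sqrt (f NK (k+3) ((i : ℤ) - 1))) ^ 2)
      ≤ ((k+3) * NK + 2 : ℕ) * c := by
    calc _ ≤ ∑ _i ∈ Finset.range ((k+3) * NK + 2), c := Finset.sum_le_sum hterm
      _ = ((k+3) * NK + 2 : ℕ) * c := by
          rw [Finset.sum_const, Finset.card_range, nsmul_eq_mul]
  have hfinal : (1 / P ^ (k+3)) * (((k+3) * NK + 2 : ℕ) * c)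
      ≤ (Nat.factorial (k+3) : ℝ) / P ^ 2 := by
    rw [div_mul_eq_mul_div, one_mul, div_le_div_iff₀ (by positivity) (by positivity)]
    have hPk : P ^ (k+3) = P ^ k * P^3 := by ring
    have hfact : (2:ℝ) * (k+3) ≤ (Nat.factorial (k+3) : ℝ) := by
      have h2 : 2 ≤ Nat.factorial (k+2) := by
        have := Nat.self_le_factorial (k+2); omega
      have : 2 * (k+3) ≤ Nat.factorial (k+3) := by
        have h3 : Nat.factorial (k+3) = (k+3) * Nat.factorial (k+2) := rfl
        calc 2 * (k+3) ≤ Nat.factorial (k+2) * (k+3) := Nat.mul_le_mul_right (k+3) h2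
          _ = (k+3) * Nat.factorial (k+2) := Nat.mul_comm _ _
          _ = Nat.factorial (k+3) := h3.symm
      exact_mod_cast this
    have hcnt : (((k+3) * NK + 2 : ℕ) : ℝ) ≤ ((k:ℝ)+3) * P := by
      push_cast
      have : (1:ℝ) ≤ P := by rw [hP]; push_cast; linarith [Nat.cast_nonneg (α := ℝ) NK]
      nlinarith [this]
    calc (((k+3) * NK + 2 : ℕ) : ℝ) * c * P^2
        = ((((k+3) * NK + 2 : ℕ) : ℝ) * 2) * (P^k * P^2) := by rw [hc]; ring
      _ ≤ (((k:ℝ)+3) * P * 2) * (P^k * P^2) := by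
          apply mul_le_mul_of_nonneg_right _ (by positivity)
          apply mul_le_mul_of_nonneg_right hcnt (by norm_num)
      _ ≤ ((Nat.factorial (k+3) : ℝ)) * (P^k * P^3) := by
          have : ((k:ℝ)+3) * P * 2 = (2*((k:ℝ)+3)) * P := by ring
          rw [this]
          calc (2*((k:ℝ)+3)) * P * (P^k * P^2)
              = (2*((k:ℝ)+3)) * (P^k * P^3) := by ring
            _ ≤ (Nat.factorial (k+3) : ℝ) * (P^k * P^3) := by
                apply mul_le_mul_of_nonneg_right _ (by positivity)
                exact_mod_cast hfact
      _ = (Nat.factorial (k+3) : ℝ) * P ^ (k+3) := by rw [hPk]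
  calc (1 / P ^ (k+3)) *
      (∑ i ∈ Finset.range ((k+3) * NK + 2),
        (Real.sqrt (f NK (k+3) ((i : ℤ) - 1 + 1)) -
          Real.sqrt (f NK (k+3) ((i : ℤ) - 1))) ^ 2)
      ≤ (1 / P ^ (k+3)) * (((k+3) * NK + 2 : ℕ) * c) := by
        apply mul_le_mul_of_nonneg_left hsum (by positivity)
    _ ≤ (Nat.factorial (k+3) : ℝ) / P ^ 2 := hfinal
end

section
/- (Theorem 1, case M = 2, exact asymptotics.) Define v(N_K) := 2·(1 − (2/(N_K+1)²) · Σ_{n=1}^{N_K} √(n(n+1))), which equals the canonical Collett phase variance of two copies of the equal superposition state. Then v(N_K) · N_K² / ln(N_K) → 1/2 as N_K → ∞; in particular v(N_K) = Θ(ln N_K / N_K²), so two copies do not attain Heisenberg-limited 1/N_K² scaling. -/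
/-- The canonical Collett phase variance of two copies of the equal superposition
state: `v(N_K) = 2·(1 − (2/(N_K+1)²) · Σ_{n=1}^{N_K} √(n(n+1)))`. -/
noncomputable def v (NK : ℕ) : ℝ :=
  2 * (1 - (2 / ((NK : ℝ) + 1) ^ 2) *
    ∑ n ∈ Finset.range NK, Real.sqrt (((n : ℝ) + 1) * ((n : ℝ) + 2)))

noncomputable def Sf (N : ℕ) : ℝ :=
  ∑ n ∈ Finset.range N, (((n : ℝ) + 3/2) - Real.sqrt (((n : ℝ) + 1) * ((n : ℝ) + 2)))

lemma sum_lin (N : ℕ) : ∑ n ∈ Finset.range N, ((n : ℝ) + 3/2) = N * (N + 2) / 2 := by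
  induction N with
  | zero => simp
  | succ k ih => rw [Finset.sum_range_succ, ih]; push_cast; ring

lemma hv (N : ℕ) : v N = (2 + 4 * Sf N) / ((N : ℝ) + 1) ^ 2 := by
  have h1 : ((N : ℝ) + 1) ^ 2 ≠ 0 := by positivity
  unfold v Sf
  rw [Finset.sum_sub_distrib, sum_lin]
  field_simp
  ring

lemma sqrt_facts (n : ℕ) :
    (Real.sqrt (((n : ℝ) + 1) * ((n : ℝ) + 2))) ^ 2 = ((n : ℝ) + 1) * ((n : ℝ) + 2) ∧
    Real.sqrt (((n : ℝ) + 1) * ((n : ℝ) + 2)) ≤ (n : ℝ) + 3/2 ∧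
    (n : ℝ) + 1/2 ≤ Real.sqrt (((n : ℝ) + 1) * ((n : ℝ) + 2)) := by
  have h0 : (0:ℝ) ≤ ((n : ℝ) + 1) * ((n : ℝ) + 2) := by positivity
  have hs2 := Real.sq_sqrt h0
  have hs0 := Real.sqrt_nonneg (((n : ℝ) + 1) * ((n : ℝ) + 2))
  refine ⟨hs2, ?_, ?_⟩
  · nlinarith [hs2, hs0]
  · nlinarith [hs2, hs0]

lemma term_lb (n : ℕ) :
    1 / (8 * ((n : ℝ) + 2)) ≤ ((n : ℝ) + 3/2) - Real.sqrt (((n : ℝ) + 1) * ((n : ℝ) + 2)) := by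
  obtain ⟨hs2, hub, hlb⟩ := sqrt_facts n
  rw [div_le_iff₀ (by positivity)]
  nlinarith [hs2, hub, hlb]

lemma term_ub (n : ℕ) :
    ((n : ℝ) + 3/2) - Real.sqrt (((n : ℝ) + 1) * ((n : ℝ) + 2)) ≤ 1 / (8 * ((n : ℝ) + 1)) := by
  obtain ⟨hs2, hub, hlb⟩ := sqrt_facts n
  rw [le_div_iff₀ (by positivity)]
  nlinarith [hs2, hub, hlb]

lemma Sf_ub (N : ℕ) : Sf N ≤ (1 + Real.log N) / 8 := by
  have h1 : Sf N ≤ ∑ n ∈ Finset.range N, 1 / (8 * ((n : ℝ) + 1)) :=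
    Finset.sum_le_sum fun n _ => term_ub n
  have h2 : ∑ n ∈ Finset.range N, 1 / (8 * ((n : ℝ) + 1)) = (harmonic N : ℝ) / 8 := by
    rw [harmonic, Rat.cast_sum, Finset.sum_div]
    refine Finset.sum_congr rfl fun n _ => ?_
    push_cast
    rw [one_div, mul_inv]
    ring
  have h3 := harmonic_le_one_add_log N
  rw [h2] at h1
  linarith

lemma Sf_lb (N : ℕ) : (Real.log N - 1) / 8 ≤ Sf N := by
  have h1 : ∑ n ∈ Finset.range N, 1 / (8 * ((n : ℝ) + 2)) ≤ Sf N :=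
    Finset.sum_le_sum fun n _ => term_lb n
  have h2 : ∑ n ∈ Finset.range N, 1 / (8 * ((n : ℝ) + 2))
      = ((harmonic (N+1) : ℝ) - 1) / 8 := by
    have hh : (harmonic (N+1) : ℝ) = ∑ n ∈ Finset.range (N+1), (((n:ℕ) : ℝ) + 1)⁻¹ := by
      rw [harmonic, Rat.cast_sum]
      refine Finset.sum_congr rfl fun n _ => ?_
      push_cast; ring
    have hh2 : (harmonic (N+1) : ℝ) = (∑ n ∈ Finset.range N, ((n:ℝ)+1+1)⁻¹) + 1 := by
      rw [hh, Finset.sum_range_succ']; push_cast; norm_num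
    rw [hh2, add_sub_cancel_right, Finset.sum_div]
    refine Finset.sum_congr rfl fun n _ => ?_
    rw [one_div, mul_inv]; ring
  have h3 := log_add_one_le_harmonic (N+1)
  have h4 : Real.log N ≤ Real.log ((N+1+1 : ℕ) : ℝ) := by
    rcases Nat.eq_zero_or_pos N with h | h
    · simp [h]; exact Real.log_nonneg (by norm_num)
    · apply Real.log_le_log (by exact_mod_cast h)
      push_cast; linarith
  rw [h2] at h1
  push_cast at h3 h4
  linarith

/-- Theorem 1, case `M = 2`, exact asymptotics: `v(N_K) · N_K² / ln(N_K) → 1/2`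
as `N_K → ∞`; in particular `v(N_K) = Θ(ln N_K / N_K²)`, so two copies do not attain
Heisenberg-limited `1/N_K²` scaling. -/
theorem stmt11 :
    Filter.Tendsto (fun NK : ℕ => v NK * (NK : ℝ) ^ 2 / Real.log NK)
      Filter.atTop (nhds (1 / 2)) := by
  have hlog : Filter.Tendsto (fun N : ℕ => Real.log N) Filter.atTop Filter.atTop :=
    Real.tendsto_log_atTop.comp tendsto_natCast_atTop_atTop
  have hinv : Filter.Tendsto (fun N : ℕ => (Real.log N)⁻¹) Filter.atTop (nhds 0) :=
    hlog.inv_tendsto_atTop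
  have hS : Filter.Tendsto (fun N : ℕ => Sf N / Real.log N) Filter.atTop (nhds (1/8)) := by
    have hlow : Filter.Tendsto (fun N : ℕ => 1/8 - (Real.log N)⁻¹ / 8) Filter.atTop
        (nhds (1/8)) := by
      have := Filter.Tendsto.const_sub (1/8 : ℝ) (hinv.div_const 8)
      simpa using this
    have hhigh : Filter.Tendsto (fun N : ℕ => 1/8 + (Real.log N)⁻¹ / 8) Filter.atTop
        (nhds (1/8)) := by
      have := Filter.Tendsto.const_add (1/8 : ℝ) (hinv.div_const 8)
      simpa using this
    refine tendsto_of_tendsto_of_tendsto_of_le_of_le' hlow hhigh ?_ ?_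
    · filter_upwards [Filter.eventually_ge_atTop 2] with N hN
      have hlogpos : 0 < Real.log N := Real.log_pos (by exact_mod_cast hN)
      have h := Sf_lb N
      rw [le_div_iff₀ hlogpos]
      have : (1/8 - (Real.log N)⁻¹ / 8) * Real.log N = (Real.log N - 1) / 8 := by
        field_simp
      rw [this]; exact h
    · filter_upwards [Filter.eventually_ge_atTop 2] with N hN
      have hlogpos : 0 < Real.log N := Real.log_pos (by exact_mod_cast hN)
      have h := Sf_ub N
      rw [div_le_iff₀ hlogpos]
      have : (1/8 + (Real.log N)⁻¹ / 8) * Real.log N = (1 + Real.log N) / 8 := by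
        field_simp; ring
      rw [this]; exact h
  have hfrac : Filter.Tendsto (fun N : ℕ => ((N : ℝ) / ((N : ℝ) + 1)) ^ 2) Filter.atTop
      (nhds 1) := by
    have := (tendsto_natCast_div_add_atTop (1 : ℝ)).pow 2
    simpa using this
  have hG : Filter.Tendsto
      (fun N : ℕ => (2 * (Real.log N)⁻¹ + 4 * (Sf N / Real.log N)) *
        ((N : ℝ) / ((N : ℝ) + 1)) ^ 2) Filter.atTop (nhds ((2 * 0 + 4 * (1/8)) * 1)) :=
    (((hinv.const_mul 2).add (hS.const_mul 4)).mul hfrac)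
  have hval : ((2 : ℝ) * 0 + 4 * (1/8)) * 1 = 1/2 := by norm_num
  rw [hval] at hG
  refine hG.congr' ?_
  filter_upwards [Filter.eventually_ge_atTop 2] with N hN
  have hN1 : ((N : ℝ) + 1) ≠ 0 := by positivity
  have hlogpos : Real.log N ≠ 0 := ne_of_gt (Real.log_pos (by exact_mod_cast hN))
  rw [hv N]
  field_simp
end

section
/- (Analytic result for M = 1, the QPEA.) Let c : ℕ → ℝ be defined by c_0 = 0 and c_{j+1} = (2^{−j} + c_j)/4. Then c_j = (2^j − 1)/4^j for all j ≥ 0. Consequently, for every integer K ≥ 0, the sharpness of the quantum phase estimation algorithm, μ_K := 2^{K+1} · c_{K+1}, equals 1 − 2^{−(K+1)}, and the resulting Holevo phase variance satisfies V_H = μ_K^{−2} − 1 = 2/N + 1/N², where N = 2^{K+1} − 1 is the total number of resources. Thus the QPEA achieves only standard-quantum-limit scaling Θ(1/N), not the Heisenberg limit. -/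
/-- Analytic result for `M = 1` (the QPEA): if `c_0 = 0` and
`c_{j+1} = (2^{−j} + c_j)/4`, then `c_j = (2^j − 1)/4^j` for all `j`; consequently
the sharpness `μ_K = 2^{K+1} · c_{K+1}` equals `1 − 2^{−(K+1)}`, and the Holevo
phase variance is `V_H = μ_K^{−2} − 1 = 2/N + 1/N²` with `N = 2^{K+1} − 1` the total
number of resources: only standard-quantum-limit scaling `Θ(1/N)`. -/
theorem stmt18 (c : ℕ → ℝ) (h0 : c 0 = 0)
    (hrec : ∀ j : ℕ, c (j + 1) = ((2 : ℝ) ^ (-(j : ℤ)) + c j) / 4) :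
    (∀ j : ℕ, c j = ((2 : ℝ) ^ j - 1) / 4 ^ j) ∧
    (∀ K : ℕ,
      (2 : ℝ) ^ (K + 1) * c (K + 1) = 1 - (2 : ℝ) ^ (-((K : ℤ) + 1)) ∧
      ((2 : ℝ) ^ (K + 1) * c (K + 1)) ^ (-2 : ℤ) - 1
        = 2 / ((2 : ℝ) ^ (K + 1) - 1) + 1 / ((2 : ℝ) ^ (K + 1) - 1) ^ 2) := by
  have hform : ∀ j : ℕ, c j = ((2 : ℝ) ^ j - 1) / 4 ^ j := by
    intro j
    induction j with
    | zero => simpa using h0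
    | succ n ih =>
      rw [hrec n, ih]
      have h2 : (2 : ℝ) ^ (-(n : ℤ)) = ((2 : ℝ) ^ n)⁻¹ := by
        rw [zpow_neg, zpow_natCast]
      rw [h2]
      have hp : (0 : ℝ) < 2 ^ n := by positivity
      have hq : (0 : ℝ) < 4 ^ n := by positivity
      have h4 : (4 : ℝ) ^ n = (2 : ℝ) ^ n * (2 : ℝ) ^ n := by
        rw [← mul_pow]; norm_num
      rw [pow_succ, pow_succ, h4]
      field_simp
      ring
  refine ⟨hform, fun K => ?_⟩
  have hμ : (2 : ℝ) ^ (K + 1) * c (K + 1) = 1 - (2 : ℝ) ^ (-((K : ℤ) + 1)) := by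
    rw [hform (K + 1)]
    have h2 : (2 : ℝ) ^ (-((K : ℤ) + 1)) = ((2 : ℝ) ^ (K + 1))⁻¹ := by
      rw [zpow_neg]
      norm_cast
    rw [h2]
    have hp : (0 : ℝ) < 2 ^ (K + 1) := by positivity
    have hq : (0 : ℝ) < 4 ^ (K + 1) := by positivity
    have h4 : (4 : ℝ) ^ (K + 1) = (2 : ℝ) ^ (K + 1) * (2 : ℝ) ^ (K + 1) := by
      rw [← mul_pow]; norm_num
    field_simp
    rw [h4]; ring
  refine ⟨hμ, ?_⟩
  rw [hμ]
  have h2 : (2 : ℝ) ^ (-((K : ℤ) + 1)) = ((2 : ℝ) ^ (K + 1))⁻¹ := by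
    rw [zpow_neg]; norm_cast
  rw [h2]
  have hp : (1 : ℝ) < 2 ^ (K + 1) := by
    apply one_lt_pow₀ (by norm_num) (by omega)
  have hp0 : (0 : ℝ) < 2 ^ (K + 1) := by positivity
  have hN : (0 : ℝ) < 2 ^ (K + 1) - 1 := by linarith
  have hμpos : (0 : ℝ) < 1 - ((2 : ℝ) ^ (K + 1))⁻¹ := by
    have : ((2 : ℝ) ^ (K + 1))⁻¹ < 1 := by
      rw [inv_lt_one_iff₀]; right; exact hp
    linarith
  rw [zpow_neg, zpow_two]
  field_simp
  ring
end

section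
/- (Analytic result for M = 2.) Let b : ℕ → ℝ be defined by b_0 = 0 and b_{j+1} = (√2/8) · √(16^{−j} + b_j²). Then b_j = 4^{−j} · √(1 − 2^{−j}) for all j ≥ 0. Consequently, for every integer K ≥ 0, the sharpness μ_K := 4^{K+1} · b_{K+1} equals √(1 − 2^{−(K+1)}), and the resulting Holevo phase variance is exactly V_H = μ_K^{−2} − 1 = 1/(2^{K+1} − 1) = 2/N, where N = 2·(2^{K+1} − 1) is the total number of resources. Thus the adaptive scheme with two copies of each NOON state still gives only standard-quantum-limit scaling. -/
/-- Analytic result for `M = 2`: if `b_0 = 0` and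
`b_{j+1} = (√2/8) · √(16^{−j} + b_j²)`, then `b_j = 4^{−j} · √(1 − 2^{−j})` for all
`j`; consequently the sharpness `μ_K = 4^{K+1} · b_{K+1}` equals `√(1 − 2^{−(K+1)})`,
and the Holevo phase variance is exactly `V_H = μ_K^{−2} − 1 = 1/(2^{K+1} − 1) = 2/N`
with `N = 2·(2^{K+1} − 1)` the total number of resources: still only
standard-quantum-limit scaling. -/
theorem stmt19 (b : ℕ → ℝ) (h0 : b 0 = 0)
    (hrec : ∀ j : ℕ,
      b (j + 1) = (Real.sqrt 2 / 8) * Real.sqrt ((16 : ℝ) ^ (-(j : ℤ)) + (b j) ^ 2)) :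
    (∀ j : ℕ, b j = (4 : ℝ) ^ (-(j : ℤ)) * Real.sqrt (1 - (2 : ℝ) ^ (-(j : ℤ)))) ∧
    (∀ K : ℕ,
      (4 : ℝ) ^ (K + 1) * b (K + 1) = Real.sqrt (1 - (2 : ℝ) ^ (-((K : ℤ) + 1))) ∧
      ((4 : ℝ) ^ (K + 1) * b (K + 1)) ^ (-2 : ℤ) - 1 = 1 / ((2 : ℝ) ^ (K + 1) - 1) ∧
      1 / ((2 : ℝ) ^ (K + 1) - 1) = 2 / (2 * ((2 : ℝ) ^ (K + 1) - 1))) := by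
  have hb : ∀ j : ℕ, b j = (4 : ℝ) ^ (-(j : ℤ)) * Real.sqrt (1 - (2 : ℝ) ^ (-(j : ℤ))) := by
    intro j
    induction j with
    | zero => simp [h0]
    | succ j ih =>
      set x : ℝ := (2 : ℝ) ^ (-(j : ℤ)) with hxdef
      have hx0 : 0 < x := zpow_pos (by norm_num) _
      have hx1 : x ≤ 1 := by
        rw [hxdef]
        calc (2:ℝ) ^ (-(j:ℤ)) ≤ (2:ℝ) ^ (0:ℤ) := by
              apply zpow_le_zpow_right₀ (by norm_num) (by omega)
          _ = 1 := by norm_num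
      have h4 : (4 : ℝ) ^ (-(j : ℤ)) = x ^ 2 := by
        rw [hxdef, show (4:ℝ) = (2:ℝ) ^ (2:ℤ) by norm_num, ← zpow_mul,
          ← zpow_natCast ((2:ℝ) ^ (-(j:ℤ))) 2, ← zpow_mul]
        congr 1; ring
      have h16 : (16 : ℝ) ^ (-(j : ℤ)) = x ^ 4 := by
        rw [hxdef, show (16:ℝ) = (2:ℝ) ^ (4:ℤ) by norm_num, ← zpow_mul,
          ← zpow_natCast ((2:ℝ) ^ (-(j:ℤ))) 4, ← zpow_mul]
        congr 1; ring
      have h2s : (2 : ℝ) ^ (-((j:ℕ) + 1 : ℤ)) = x / 2 := by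
        rw [hxdef, show (-((j:ℕ) + 1 : ℤ)) = -(j:ℤ) + (-1) by ring, zpow_add₀ (by norm_num)]
        norm_num; ring
      have h4s : (4 : ℝ) ^ (-((j:ℕ) + 1 : ℤ)) = x ^ 2 / 4 := by
        rw [show (-((j:ℕ) + 1 : ℤ)) = -(j:ℤ) + (-1) by ring, zpow_add₀ (by norm_num), h4]
        norm_num; ring
      have hcast : (-(((j:ℕ) + 1 : ℕ) : ℤ)) = (-((j:ℕ) + 1 : ℤ)) := by push_cast; ring
      rw [hrec j, ih, hcast, h2s, h4s, h16, h4]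
      have hsq : Real.sqrt (1 - x) ^ 2 = 1 - x := Real.sq_sqrt (by linarith)
      have key : (x ^ 2) ^ 2 * (Real.sqrt (1 - x)) ^ 2 = x ^ 4 * (1 - x) := by
        rw [hsq]; ring
      rw [mul_pow, key]
      have h1 : x ^ 4 + x ^ 4 * (1 - x) = x ^ 4 * (2 - x) := by ring
      rw [h1, Real.sqrt_mul (by positivity)]
      have h2 : Real.sqrt (x ^ 4) = x ^ 2 := by
        rw [show x ^ 4 = (x^2)^2 by ring, Real.sqrt_sq (by positivity)]
      rw [h2]
      have h3 : Real.sqrt 2 * Real.sqrt (2 - x) = 2 * Real.sqrt (1 - x / 2) := by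
        rw [← Real.sqrt_mul (by norm_num)]
        rw [show 2 * Real.sqrt (1 - x/2) = Real.sqrt (2^2) * Real.sqrt (1 - x/2) by
          rw [Real.sqrt_sq (by norm_num)]]
        rw [← Real.sqrt_mul (by positivity)]
        congr 1; ring
      calc Real.sqrt 2 / 8 * (x ^ 2 * Real.sqrt (2 - x))
          = (Real.sqrt 2 * Real.sqrt (2 - x)) * x ^ 2 / 8 := by ring
        _ = (2 * Real.sqrt (1 - x/2)) * x ^ 2 / 8 := by rw [h3]
        _ = x ^ 2 / 4 * Real.sqrt (1 - x / 2) := by ring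
  refine ⟨hb, fun K => ?_⟩
  have hcast : (-(((K:ℕ) + 1 : ℕ) : ℤ)) = (-((K:ℤ) + 1)) := by push_cast; ring
  have hmu : (4 : ℝ) ^ (K + 1) * b (K + 1) = Real.sqrt (1 - (2 : ℝ) ^ (-((K : ℤ) + 1))) := by
    rw [hb (K+1), hcast, ← mul_assoc]
    have : (4 : ℝ) ^ (K + 1) * (4 : ℝ) ^ (-((K:ℤ) + 1)) = 1 := by
      rw [← zpow_natCast (4:ℝ) (K+1), ← zpow_add₀ (by norm_num : (4:ℝ) ≠ 0)]
      push_cast; ring_nf; norm_num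
    rw [this, one_mul]
  refine ⟨hmu, ?_, ?_⟩
  · rw [hmu]
    have hy : (2:ℝ) ^ (-((K:ℤ)+1)) = ((2:ℝ) ^ (K+1))⁻¹ := by
      rw [← zpow_natCast (2:ℝ) (K+1), ← zpow_neg]
      push_cast; ring_nf
    have hpow : (1:ℝ) < (2:ℝ) ^ (K+1) := one_lt_pow₀ (by norm_num) (by omega)
    have hlt : (2:ℝ) ^ (-((K:ℤ)+1)) < 1 := by rw [hy]; rw [inv_lt_one_iff₀]; right; exact hpow
    have hpos : 0 < 1 - (2:ℝ) ^ (-((K:ℤ)+1)) := by linarith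
    have hinv : (Real.sqrt (1 - (2:ℝ) ^ (-((K:ℤ)+1)))) ^ (-2:ℤ)
        = (1 - (2:ℝ) ^ (-((K:ℤ)+1)))⁻¹ := by
      rw [zpow_neg, show ((2:ℤ)) = ((2:ℕ):ℤ) by norm_num, zpow_natCast,
        Real.sq_sqrt hpos.le]
    rw [hinv, hy]
    have h2 : (2:ℝ) ^ (K+1) ≠ 0 := by positivity
    have h3 : (2:ℝ) ^ (K+1) - 1 ≠ 0 := by linarith
    have h4 : 1 - ((2:ℝ) ^ (K+1))⁻¹ ≠ 0 := by
      rw [hy] at hpos; linarith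
    field_simp
    ring
  · have hpow : (1:ℝ) < (2:ℝ) ^ (K+1) := one_lt_pow₀ (by norm_num) (by omega)
    have : (2:ℝ) ^ (K+1) - 1 ≠ 0 := by linarith
    field_simp
end
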